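/- Let g, g′, f, f′, η^f, η^{f′} be as in the previous statement, and let h ⊂ g be a subspace such that [U′^⊥, h] = 0 (bracket in g). Then for every v ∈ S(g′) and h ∈ h, one has η^f([v, h]) = η^f([η^{f′}(v), h]), where [·, h] denotes the derivation of the symmetric algebra extending ad(−h) applied componentwise. -/
import Mathlib


/-- in the setting of Statement 14 (with `g` now a Lie algebra and `B` playing
the role of `S(g)`), let `𝔥 ⊆ g` be a subspace with `⁅U'^⊥, 𝔥⁆ = 0`, and for `y ∈ g` let
`D y` be the derivation of `B` extending `a ↦ ⁅a, y⁆` (i.e. `D y (j a) = j ⁅a, y⁆`).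
Then for every `y ∈ 𝔥` and every `v ∈ S(g')` (the subalgebra generated by `j(g')`),
`η^f([v, y]) = η^f([η^{f'}(v), y])`, i.e. `η^f(D y v) = η^f(D y (η^{f'} v))`. -/
theorem stmt15 {K : Type*} [Field K]
    {g : Type*} [LieRing g] [LieAlgebra K g]
    {B : Type*} [CommRing B] [Algebra K B]
    (g' : Submodule K g) (j : g →ₗ[K] B)
    (πf π' : g →ₗ[K] g) (φ φ' : g →ₗ[K] K)
    (U'perp : Submodule K g)
    (hU' : U'perp ≤ LinearMap.ker πf)
    (hπ'mem : ∀ a ∈ g', π' a ∈ g')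
    (hπ' : ∀ a ∈ g', a - π' a ∈ U'perp)
    (hφ : ∀ a ∈ g', φ a = φ' a)
    (hφπ' : ∀ a ∈ g', φ' (π' a) = 0)
    (ηf ηf' : B →ₐ[K] B)
    (hηf : ∀ a : g, ηf (j a) = j (πf a) + algebraMap K B (φ a))
    (hηf' : ∀ a ∈ g', ηf' (j a) = j (π' a) + algebraMap K B (φ' a))
    (𝔥 : Submodule K g)
    (hcomm : ∀ x ∈ U'perp, ∀ y ∈ 𝔥, ⁅x, y⁆ = 0)
    (D : g → Derivation K B B)
    (hD : ∀ (y : g) (a : g), D y (j a) = j ⁅a, y⁆) :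
    ∀ y ∈ 𝔥, ∀ v ∈ Algebra.adjoin K (⇑j '' (g' : Set g)),
      ηf (D y v) = ηf (D y (ηf' v)) := by
  intro y hy v hv
  -- Statement 14: ηf (ηf' v) = ηf v on the adjoin
  have stmt14 : ∀ w ∈ Algebra.adjoin K (⇑j '' (g' : Set g)), ηf (ηf' w) = ηf w := by
    intro w hw
    induction hw using Algebra.adjoin_induction with
    | mem x hx =>
      obtain ⟨a, ha, rfl⟩ := hx
      have hπa : πf (π' a) = πf a := by
        have h0 : πf (a - π' a) = 0 := hU' (hπ' a ha)
        rw [map_sub, sub_eq_zero] at h0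
        exact h0.symm
      rw [hηf' a ha, map_add, hηf, hπa, AlgHom.commutes, hηf,
        hφ (π' a) (hπ'mem a ha), hφπ' a ha, hφ a ha]
      ring_nf
      simp
    | algebraMap r => simp
    | add x z hx hz ihx ihz => simp [ihx, ihz]
    | mul x z hx hz ihx ihz => simp [ihx, ihz]
  induction hv using Algebra.adjoin_induction with
  | mem x hx =>
    obtain ⟨a, ha, rfl⟩ := hx
    have hbr : ⁅π' a, y⁆ = ⁅a, y⁆ := by
      have h0 : ⁅a - π' a, y⁆ = 0 := hcomm _ (hπ' a ha) y hy
      rw [sub_lie, sub_eq_zero] at h0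
      exact h0.symm
    rw [hηf' a ha, map_add, hD, hD]
    have : (D y) ((algebraMap K B) (φ' a)) = 0 := by
      simp
    rw [this, add_zero, hbr]
  | algebraMap r =>
    have h1 : (D y) ((algebraMap K B) r) = 0 := by
      simp
    rw [h1, AlgHom.commutes ηf', h1]
  | add x z hx hz ihx ihz =>
    simp only [map_add]
    rw [ihx, ihz]
  | mul x z hx hz ihx ihz =>
    simp only [map_mul, Derivation.leibniz, smul_eq_mul, map_add, map_mul]
    rw [ihx, ihz, stmt14 x hx, stmt14 z hz]
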